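/- Let X, Y be normed linear spaces and T, A bounded linear operators with T ≠ 0. Suppose there exist sequences (x_n), (y_n) of unit vectors and positive reals ε_n → 0, δ_n → 0 such that ‖Tx_n‖ → ‖T‖, ‖Ty_n‖ → ‖T‖, and for all n, ‖Tx_n + λAx_n‖ ≥ √(1−ε_n²)·‖Tx_n‖ for all λ ≥ 0 and ‖Ty_n + λAy_n‖ ≥ √(1−δ_n²)·‖Ty_n‖ for all λ ≤ 0. Then ‖T + λA‖ ≥ ‖T‖ for all real λ. -/

import Mathlib

theorem stmt_5 {X Y : Type*} [NormedAddCommGroup X] [NormedSpace ℝ X]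
    [NormedAddCommGroup Y] [NormedSpace ℝ Y]
    (T A : X →L[ℝ] Y) (hT : T ≠ 0) (x y : ℕ → X) (ε δ : ℕ → ℝ)
    (hx : ∀ n, ‖x n‖ = 1) (hy : ∀ n, ‖y n‖ = 1)
    (hε : ∀ n, 0 < ε n) (hδ : ∀ n, 0 < δ n)
    (hε0 : Filter.Tendsto ε Filter.atTop (nhds 0))
    (hδ0 : Filter.Tendsto δ Filter.atTop (nhds 0))
    (hTx : Filter.Tendsto (fun n => ‖T (x n)‖) Filter.atTop (nhds ‖T‖))
    (hTy : Filter.Tendsto (fun n => ‖T (y n)‖) Filter.atTop (nhds ‖T‖))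
    (hplus : ∀ n, ∀ l : ℝ, 0 ≤ l →
      Real.sqrt (1 - (ε n) ^ 2) * ‖T (x n)‖ ≤ ‖T (x n) + l • A (x n)‖)
    (hminus : ∀ n, ∀ l : ℝ, l ≤ 0 →
      Real.sqrt (1 - (δ n) ^ 2) * ‖T (y n)‖ ≤ ‖T (y n) + l • A (y n)‖) :
    ∀ l : ℝ, ‖T‖ ≤ ‖T + l • A‖ := by
  intro l
  rcases le_total 0 l with hl | hl
  · have htend : Filter.Tendsto (fun n => Real.sqrt (1 - (ε n) ^ 2) * ‖T (x n)‖)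
        Filter.atTop (nhds ‖T‖) := by
      have h1 : Filter.Tendsto (fun n => Real.sqrt (1 - (ε n) ^ 2))
          Filter.atTop (nhds 1) := by
        have : Filter.Tendsto (fun n => 1 - (ε n) ^ 2) Filter.atTop (nhds 1) := by
          have := hε0.pow 2
          simpa using (tendsto_const_nhds (x := (1:ℝ)).sub this)
        simpa [Function.comp_def] using (Real.continuous_sqrt.continuousAt.tendsto.comp this)
      simpa using h1.mul hTx
    refine le_of_tendsto' htend fun n => ?_
    calc Real.sqrt (1 - (ε n) ^ 2) * ‖T (x n)‖ ≤ ‖T (x n) + l • A (x n)‖ :=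
          hplus n l hl
      _ = ‖(T + l • A) (x n)‖ := by simp
      _ ≤ ‖T + l • A‖ * ‖x n‖ := (T + l • A).le_opNorm _
      _ = ‖T + l • A‖ := by rw [hx n, mul_one]
  · have htend : Filter.Tendsto (fun n => Real.sqrt (1 - (δ n) ^ 2) * ‖T (y n)‖)
        Filter.atTop (nhds ‖T‖) := by
      have h1 : Filter.Tendsto (fun n => Real.sqrt (1 - (δ n) ^ 2))
          Filter.atTop (nhds 1) := by
        have : Filter.Tendsto (fun n => 1 - (δ n) ^ 2) Filter.atTop (nhds 1) := by
          have := hδ0.pow 2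
          simpa using (tendsto_const_nhds (x := (1:ℝ)).sub this)
        simpa [Function.comp_def] using (Real.continuous_sqrt.continuousAt.tendsto.comp this)
      simpa using h1.mul hTy
    refine le_of_tendsto' htend fun n => ?_
    calc Real.sqrt (1 - (δ n) ^ 2) * ‖T (y n)‖ ≤ ‖T (y n) + l • A (y n)‖ :=
          hminus n l hl
      _ = ‖(T + l • A) (y n)‖ := by simp
      _ ≤ ‖T + l • A‖ * ‖y n‖ := (T + l • A).le_opNorm _
      _ = ‖T + l • A‖ := by rw [hy n, mul_one]
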